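/- Let C be a unary covering of a finite nonempty set U and define cl_C(X) = ⋂{S : SL(S) = S and X ⊆ S} for X ⊆ U. Then cl_C satisfies the matroid exchange axiom (CL4) — for all X ⊆ U and x, y ∈ U, if y ∈ cl_C(X ∪ {x}) \ cl_C(X) then x ∈ cl_C(X ∪ {y}) — if and only if the family {N(x) : x ∈ U} forms a partition of U, i.e., for all x, y ∈ U, either N(x) = N(y) or N(x) ∩ N(y) = ∅. -/

import Mathlib

open Set

/-- A covering of a finite nonempty universe `α`: a family of nonempty subsets whose union is everything. -/
def IsCovering {α : Type*} (C : Set (Set α)) : Prop :=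
  (∀ K ∈ C, K.Nonempty) ∧ ⋃₀ C = Set.univ

/-- The second type of covering lower approximation. -/
def SL {α : Type*} (C : Set (Set α)) (X : Set α) : Set α :=
  ⋃₀ {K | K ∈ C ∧ K ⊆ X}

/-- The second type of covering upper approximation. -/
def SH {α : Type*} (C : Set (Set α)) (X : Set α) : Set α :=
  ⋃₀ {K | K ∈ C ∧ (K ∩ X).Nonempty}

/-- The minimal description of a point. -/
def Md {α : Type*} (C : Set (Set α)) (x : α) : Set (Set α) :=
  {K | K ∈ C ∧ x ∈ K ∧ ∀ S ∈ C, x ∈ S → S ⊆ K → S = K}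

/-- A covering is unary if every point has exactly one element in its minimal description. -/
def Unary {α : Type*} (C : Set (Set α)) : Prop :=
  ∀ x : α, ∃! K, K ∈ Md C x

/-- The neighborhood of a point. -/
def Nbhd {α : Type*} (C : Set (Set α)) (x : α) : Set α :=
  ⋂₀ {K | K ∈ C ∧ x ∈ K}

/-- The indiscernible neighborhood of a point. -/
def IndNbhd {α : Type*} (C : Set (Set α)) (x : α) : Set α :=
  ⋃₀ {K | K ∈ C ∧ x ∈ K}

/-- A member of the covering is reducible if it is a union of other members. -/
def Reducible {α : Type*} (C : Set (Set α)) (K : Set α) : Prop :=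
  ∃ D ⊆ C \ {K}, K = ⋃₀ D

/-- The reduct of a covering: its irreducible members. -/
def reduct {α : Type*} (C : Set (Set α)) : Set (Set α) :=
  {K | K ∈ C ∧ ¬ Reducible C K}

/-- The closure operator induced by the fixed point family of `SL`. -/
def clC {α : Type*} (C : Set (Set α)) (X : Set α) : Set α :=
  ⋂₀ {S | SL C S = S ∧ X ⊆ S}

section Aux

variable {α : Type*} [Fintype α] {C : Set (Set α)}

lemma mem_nbhd_self (x : α) : x ∈ Nbhd C x :=
  mem_sInter.2 fun _ hK => hK.2

lemma nbhd_subset {K : Set α} (hK : K ∈ C) {x : α} (hx : x ∈ K) : Nbhd C x ⊆ K :=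
  sInter_subset_of_mem ⟨hK, hx⟩

lemma md_subset {x : α} {K : Set α} (hK : K ∈ C) (hx : x ∈ K) :
    ∃ M ∈ Md C x, M ⊆ K := by
  obtain ⟨M, hMF, hmin⟩ := Set.Finite.exists_minimalFor (id : Set α → Set α)
    {S | S ∈ C ∧ x ∈ S ∧ S ⊆ K} (Set.toFinite _) ⟨K, hK, hx, subset_rfl⟩
  exact ⟨M, ⟨hMF.1, hMF.2.1, fun S hS hxS hSM =>
    subset_antisymm hSM (hmin ⟨hS, hxS, hSM.trans hMF.2.2⟩ hSM)⟩, hMF.2.2⟩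

lemma nbhd_mem (hC : IsCovering C) (hU : Unary C) (x : α) : Nbhd C x ∈ C := by
  obtain ⟨M, hM, huniq⟩ := hU x
  have hx : x ∈ ⋃₀ C := hC.2 ▸ mem_univ x
  obtain ⟨K, hK, hxK⟩ := hx
  have hNM : Nbhd C x = M := by
    apply subset_antisymm
    · exact sInter_subset_of_mem ⟨hM.1, hM.2.1⟩
    · intro z hz
      refine mem_sInter.2 fun K' hK' => ?_
      obtain ⟨M', hM', hM'K⟩ := md_subset hK'.1 hK'.2
      exact hM'K ((huniq M' hM').symm ▸ hz)
  rw [hNM]; exact hM.1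

lemma clC_eq (hC : IsCovering C) (hU : Unary C) (X : Set α) :
    clC C X = ⋃ x ∈ X, Nbhd C x := by
  apply subset_antisymm
  · apply sInter_subset_of_mem
    constructor
    · apply subset_antisymm
      · rintro z ⟨K, ⟨hK, hKT⟩, hz⟩; exact hKT hz
      · rintro z hz
        rw [mem_iUnion₂] at hz
        obtain ⟨x, hx, hzx⟩ := hz
        exact ⟨Nbhd C x, ⟨nbhd_mem hC hU x, fun z hz => mem_iUnion₂.2 ⟨x, hx, hz⟩⟩, hzx⟩
    · intro x hx
      exact mem_iUnion₂.2 ⟨x, hx, mem_nbhd_self x⟩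
  · intro z hz
    rw [mem_iUnion₂] at hz
    obtain ⟨x, hx, hzx⟩ := hz
    refine mem_sInter.2 fun S hS => ?_
    obtain ⟨hfix, hXS⟩ := hS
    have hxS : x ∈ SL C S := hfix.symm ▸ hXS hx
    obtain ⟨K, ⟨hK, hKS⟩, hxK⟩ := hxS
    exact hKS (nbhd_subset hK hxK hzx)

end Aux

theorem stmt_4 {α : Type*} [Fintype α] [Nonempty α] (C : Set (Set α))
    (hC : IsCovering C) (hU : Unary C) :
    (∀ (X : Set α) (x y : α),
        y ∈ clC C (X ∪ {x}) \ clC C X → x ∈ clC C (X ∪ {y})) ↔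
    (∀ x y : α, Nbhd C x = Nbhd C y ∨ Nbhd C x ∩ Nbhd C y = ∅) := by
  have key := clC_eq hC hU
  constructor
  · intro h x y
    have hsym : ∀ a b : α, b ∈ Nbhd C a → a ∈ Nbhd C b := by
      intro a b hb
      have h2 := h ∅ a b ⟨by rw [key]; simpa using hb, by rw [key]; simp⟩
      rw [key] at h2; simpa using h2
    by_cases hd : (Nbhd C x ∩ Nbhd C y) = ∅
    · exact Or.inr hd
    · left
      obtain ⟨z, hzx, hzy⟩ := nonempty_iff_ne_empty.2 hd
      have h1 : Nbhd C x ⊆ Nbhd C y :=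
        nbhd_subset (nbhd_mem hC hU y) (nbhd_subset (nbhd_mem hC hU y) hzy (hsym x z hzx))
      have h2 : Nbhd C y ⊆ Nbhd C x :=
        nbhd_subset (nbhd_mem hC hU x) (nbhd_subset (nbhd_mem hC hU x) hzx (hsym y z hzy))
      exact subset_antisymm h1 h2
  · intro h X x y hy
    obtain ⟨hy1, hy2⟩ := hy
    rw [key] at hy1 hy2 ⊢
    rw [mem_iUnion₂] at hy1
    obtain ⟨a, ha, hya⟩ := hy1
    rcases ha with haX | hax
    · exact absurd (mem_iUnion₂.2 ⟨a, haX, hya⟩) hy2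
    · rw [mem_singleton_iff] at hax; subst hax
      rcases h a y with heq | hdis
      · exact mem_iUnion₂.2 ⟨y, Or.inr rfl, heq ▸ mem_nbhd_self a⟩
      · exact absurd (hdis ▸ (⟨hya, mem_nbhd_self y⟩ : y ∈ Nbhd C a ∩ Nbhd C y)) (notMem_empty y)
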